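/- For all T₁, T₂ ∈ (t₀, t₁) with T₁ ≠ T₂ and all measures μ₁ ∈ M_eqLeb(φ_{T₁}) and μ₂ ∈ M_eqLeb(φ_{T₂}), one has μ₁ ≠ μ₂. -/

import Mathlib

open MeasureTheory Set

/-- The core map `φ_T`: apply `h₁` on `(-∞, T]` and `h₂` on `(T, ∞)`. -/
noncomputable def coreMap (h₁ h₂ : ℝ → ℝ) (T : ℝ) (t : ℝ) : ℝ :=
  if t ≤ T then h₁ t else h₂ t

/-- `M_eqLeb(φ)`: the set of `φ`-invariant ergodic Borel probability measures on `ℝ` that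
are mutually absolutely continuous with Lebesgue measure in restriction to some nonempty
open interval. -/
def MeqLeb (φ : ℝ → ℝ) : Set (Measure ℝ) :=
  {μ | IsProbabilityMeasure μ ∧ Ergodic φ μ ∧
    ∃ a b : ℝ, a < b ∧
      μ.restrict (Set.Ioo a b) ≪ volume.restrict (Set.Ioo a b) ∧
      volume.restrict (Set.Ioo a b) ≪ μ.restrict (Set.Ioo a b)}

lemma expand_aux {lam : ℝ} (h : ℝ → ℝ) (hd : Differentiable ℝ h)
    (hder : ∀ t, lam ≤ deriv h t) {x y : ℝ} (hxy : x ≤ y) :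
    lam * (y - x) ≤ h y - h x := by
  have hdf : Differentiable ℝ (fun t : ℝ => h t - lam * t) := fun t =>
    ((hd t).sub (by simpa using ((hasDerivAt_id t).const_mul lam).differentiableAt))
  have hmono : Monotone (fun t : ℝ => h t - lam * t) := by
    apply monotone_of_deriv_nonneg hdf
    intro t
    have h1 : HasDerivAt (fun u : ℝ => lam * u) lam t := by
      simpa using (hasDerivAt_id t).const_mul lam
    have h2 : HasDerivAt (fun u => h u - lam * u) (deriv h t - lam) t :=
      ((hd t).hasDerivAt).sub h1
    rw [h2.deriv]
    linarith [hder t]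
  have := hmono hxy
  simp only at this
  linarith

lemma coreMap_preimage (h₁ h₂ : ℝ → ℝ) (T : ℝ) (A : Set ℝ) :
    coreMap h₁ h₂ T ⁻¹' A = (h₁ ⁻¹' A ∩ Iic T) ∪ (h₂ ⁻¹' A ∩ Ioi T) := by
  ext t
  by_cases h : t ≤ T
  · simp [coreMap, h, not_lt.2 h]
  · simp [coreMap, h, not_le.1 h]

set_option maxHeartbeats 2000000 in
lemma key_contra
    (lam : ℝ) (hlam : 1 < lam)
    (h₁ h₂ : ℝ → ℝ)
    (h₁C : ContDiff ℝ 2 h₁) (h₂C : ContDiff ℝ 2 h₂)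
    (h₁mono : StrictMono h₁) (h₂mono : StrictMono h₂)
    (h₁bij : Function.Bijective h₁) (h₂bij : Function.Bijective h₂)
    (h₁deriv : ∀ t, lam ≤ deriv h₁ t) (h₂deriv : ∀ t, lam ≤ deriv h₂ t)
    (p q : ℝ) (hp : p < 0) (hq : 1 < q)
    (hfp : h₁ p = p) (hfq : h₂ q = q)
    (t₀ t₁ : ℝ) (ht₀ : h₂ t₀ = 0) (ht₁ : h₁ t₁ = 1)
    (T₁ T₂ : ℝ) (hT₁ : T₁ ∈ Set.Ioo t₀ t₁) (hT₂ : T₂ ∈ Set.Ioo t₀ t₁) (hlt : T₁ < T₂)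
    (μ : Measure ℝ) (hprob : IsProbabilityMeasure μ)
    (hinv₁ : MeasurePreserving (coreMap h₁ h₂ T₁) μ μ)
    (hinv₂ : MeasurePreserving (coreMap h₁ h₂ T₂) μ μ)
    (a b : ℝ) (hab : a < b)
    (hvm : volume.restrict (Set.Ioo a b) ≪ μ.restrict (Set.Ioo a b)) : False := by
  -- differentiability / continuity
  have hd₁ : Differentiable ℝ h₁ := h₁C.differentiable (by norm_num)
  have hd₂ : Differentiable ℝ h₂ := h₂C.differentiable (by norm_num)
  have hc₁ : Continuous h₁ := hd₁.continuous
  have hc₂ : Continuous h₂ := hd₂.continuous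
  have exp₁ : ∀ x y : ℝ, x ≤ y → lam * (y - x) ≤ h₁ y - h₁ x :=
    fun x y hxy => expand_aux h₁ hd₁ h₁deriv hxy
  have exp₂ : ∀ x y : ℝ, x ≤ y → lam * (y - x) ≤ h₂ y - h₂ x :=
    fun x y hxy => expand_aux h₂ hd₂ h₂deriv hxy
  -- basic dynamic facts
  have hgt₁ : ∀ t, p < t → t < h₁ t := by
    intro t ht
    have := exp₁ p t ht.le
    nlinarith
  have hlt₁ : ∀ t, t < p → h₁ t < t := by
    intro t ht
    have := exp₁ t p ht.le
    nlinarith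
  have hlt₂ : ∀ t, t < q → h₂ t < t := by
    intro t ht
    have := exp₂ t q ht.le
    nlinarith
  have hgt₂ : ∀ t, q < t → t < h₂ t := by
    intro t ht
    have := exp₂ q t ht.le
    nlinarith
  -- ordering chain
  have h0t₀ : (0:ℝ) < t₀ := by
    have h20 : h₂ 0 < 0 := hlt₂ 0 (by linarith)
    have := h₂mono.lt_iff_lt (a := 0) (b := t₀)
    rw [ht₀] at this
    exact this.1 h20
  have hpT₁ : p < T₁ := by linarith [hT₁.1]
  have hT₁t₁ : T₁ < t₁ := hT₁.2
  have hpt₁ : p < t₁ := by linarith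
  have ht₁1 : t₁ < 1 := by
    have := hgt₁ t₁ hpt₁; rw [ht₁] at this; exact this
  have hT₂q : T₂ < q := by linarith [hT₂.2]
  have h₂T₁pos : (0:ℝ) < h₂ T₁ := by
    have := h₂mono hT₁.1; rw [ht₀] at this; exact this
  have h₁T₂lt1 : h₁ T₂ < 1 := by
    have := h₁mono hT₂.2; rw [ht₁] at this; exact this
  -- order isomorphisms and inverses
  set E₁ : ℝ ≃o ℝ := StrictMono.orderIsoOfSurjective h₁ h₁mono h₁bij.2 with hE₁def
  set E₂ : ℝ ≃o ℝ := StrictMono.orderIsoOfSurjective h₂ h₂mono h₂bij.2 with hE₂def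
  have hE₁ : ⇑E₁ = h₁ := StrictMono.coe_orderIsoOfSurjective h₁ h₁mono h₁bij.2
  have hE₂ : ⇑E₂ = h₂ := StrictMono.coe_orderIsoOfSurjective h₂ h₂mono h₂bij.2
  set e₁ : ℝ → ℝ := fun x => E₁.symm x with he₁def
  set e₂ : ℝ → ℝ := fun x => E₂.symm x with he₂def
  have he₁ : ∀ x, h₁ (e₁ x) = x := fun x => by
    have := E₁.apply_symm_apply x; rwa [hE₁] at this
  have he₂ : ∀ x, h₂ (e₂ x) = x := fun x => by
    have := E₂.apply_symm_apply x; rwa [hE₂] at this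
  have he₁' : ∀ x, e₁ (h₁ x) = x := fun x => by
    have := E₁.symm_apply_apply x; rw [hE₁] at this; exact this
  have he₂' : ∀ x, e₂ (h₂ x) = x := fun x => by
    have := E₂.symm_apply_apply x; rw [hE₂] at this; exact this
  have e₁mono : StrictMono e₁ := fun x y hxy => E₁.symm.strictMono hxy
  have e₂mono : StrictMono e₂ := fun x y hxy => E₂.symm.strictMono hxy
  have e₁cont : Continuous e₁ := E₁.symm.continuous
  have e₂cont : Continuous e₂ := E₂.symm.continuous
  have pre₁Ioc : ∀ u v : ℝ, h₁ ⁻¹' Ioc u v = Ioc (e₁ u) (e₁ v) := fun u v => by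
    rw [← hE₁]; exact E₁.preimage_Ioc u v
  have pre₂Ioc : ∀ u v : ℝ, h₂ ⁻¹' Ioc u v = Ioc (e₂ u) (e₂ v) := fun u v => by
    rw [← hE₂]; exact E₂.preimage_Ioc u v
  have pre₁Ioo : ∀ u v : ℝ, h₁ ⁻¹' Ioo u v = Ioo (e₁ u) (e₁ v) := fun u v => by
    rw [← hE₁]; exact E₁.preimage_Ioo u v
  have pre₂Ioo : ∀ u v : ℝ, h₂ ⁻¹' Ioo u v = Ioo (e₂ u) (e₂ v) := fun u v => by
    rw [← hE₂]; exact E₂.preimage_Ioo u v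

  -- cancellation identity
  have cancel : ∀ A : Set ℝ, MeasurableSet A →
      μ (h₂ ⁻¹' A ∩ Ioc T₁ T₂) = μ (h₁ ⁻¹' A ∩ Ioc T₁ T₂) := by
    intro A hA
    have hmA₁ : MeasurableSet (h₁ ⁻¹' A) := hA.preimage hc₁.measurable
    have hmA₂ : MeasurableSet (h₂ ⁻¹' A) := hA.preimage hc₂.measurable
    set D := h₁ ⁻¹' A ∩ Iic T₁ with hD
    set M₁ := h₂ ⁻¹' A ∩ Ioc T₁ T₂ with hM₁
    set M₂ := h₁ ⁻¹' A ∩ Ioc T₁ T₂ with hM₂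
    set C := h₂ ⁻¹' A ∩ Ioi T₂ with hC
    have hsplit₁ : coreMap h₁ h₂ T₁ ⁻¹' A = D ∪ (M₁ ∪ C) := by
      rw [coreMap_preimage]
      congr 1
      rw [← Set.inter_union_distrib_left, Set.Ioc_union_Ioi_eq_Ioi hlt.le]
    have hsplit₂ : coreMap h₁ h₂ T₂ ⁻¹' A = D ∪ (M₂ ∪ C) := by
      rw [coreMap_preimage]
      have h' : h₁ ⁻¹' A ∩ Iic T₂ = D ∪ M₂ := by
        rw [hD, hM₂, ← Set.inter_union_distrib_left, Set.Iic_union_Ioc_eq_Iic hlt.le]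
      rw [h', union_assoc]
    have hIocIoi : Disjoint (Ioc T₁ T₂) (Ioi T₂) := by
      rw [Set.disjoint_left]; intro x hx hx'; exact absurd hx.2 (not_le.2 hx')
    have hsubM₁ : M₁ ∪ C ⊆ Ioi T₁ :=
      union_subset (inter_subset_right.trans Ioc_subset_Ioi_self)
        (inter_subset_right.trans (Ioi_subset_Ioi hlt.le))
    have hsubM₂ : M₂ ∪ C ⊆ Ioi T₁ :=
      union_subset (inter_subset_right.trans Ioc_subset_Ioi_self)
        (inter_subset_right.trans (Ioi_subset_Ioi hlt.le))
    have hdis : Disjoint (Iic T₁) (Ioi T₁) := Iic_disjoint_Ioi le_rfl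
    have hd1 : Disjoint D (M₁ ∪ C) := hdis.mono inter_subset_right hsubM₁
    have hd2 : Disjoint D (M₂ ∪ C) := hdis.mono inter_subset_right hsubM₂
    have hdMC₁ : Disjoint M₁ C := hIocIoi.mono inter_subset_right inter_subset_right
    have hdMC₂ : Disjoint M₂ C := hIocIoi.mono inter_subset_right inter_subset_right
    have mM₁ : MeasurableSet M₁ := hmA₂.inter measurableSet_Ioc
    have mM₂ : MeasurableSet M₂ := hmA₁.inter measurableSet_Ioc
    have mC : MeasurableSet C := hmA₂.inter measurableSet_Ioi
    have m1 : μ (coreMap h₁ h₂ T₁ ⁻¹' A) = μ D + (μ M₁ + μ C) := by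
      rw [hsplit₁, measure_union hd1 (mM₁.union mC), measure_union hdMC₁ mC]
    have m2 : μ (coreMap h₁ h₂ T₂ ⁻¹' A) = μ D + (μ M₂ + μ C) := by
      rw [hsplit₂, measure_union hd2 (mM₂.union mC), measure_union hdMC₂ mC]
    have k₁ : μ (coreMap h₁ h₂ T₁ ⁻¹' A) = μ A := hinv₁.measure_preimage hA.nullMeasurableSet
    have k₂ : μ (coreMap h₁ h₂ T₂ ⁻¹' A) = μ A := hinv₂.measure_preimage hA.nullMeasurableSet
    have heq' : μ D + (μ M₁ + μ C) = μ D + (μ M₂ + μ C) := by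
      rw [← m1, ← m2, k₁, k₂]
    have h2' : μ M₁ + μ C = μ M₂ + μ C :=
      (ENNReal.add_right_inj (measure_ne_top μ D)).1 heq'
    rw [add_comm (μ M₁) (μ C), add_comm (μ M₂) (μ C)] at h2'
    exact (ENNReal.add_right_inj (measure_ne_top μ C)).1 h2'
  -- the middle interval is null
  have hJ : μ (Ioc T₁ T₂) = 0 := by
    set g : ℝ → ℝ := fun y => e₁ (h₂ y) with hgdef
    set x : ℕ → ℝ := fun n => g^[n] T₂ with hxdef
    have hx0 : x 0 = T₂ := rfl
    have hxs : ∀ n, x (n + 1) = g (x n) := fun n => Function.iterate_succ_apply' g n T₂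
    have hgcont : Continuous g := e₁cont.comp hc₂
    have hF : ∀ y ∈ Icc T₁ T₂, g y < y := by
      intro y hy
      have h2y : h₂ y < y := hlt₂ y (by linarith [hy.2])
      have h1y : y < h₁ y := hgt₁ y (by linarith [hy.1])
      have : e₁ (h₂ y) < e₁ (h₁ y) := e₁mono (by linarith)
      rwa [he₁'] at this
    obtain ⟨z, hz, hminz⟩ := (isCompact_Icc).exists_isMinOn (α := ℝ)
      (nonempty_Icc.2 hlt.le) ((continuous_id.sub hgcont).continuousOn (s := Icc T₁ T₂))
    set δ : ℝ := z - g z with hδdef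
    have hδpos : 0 < δ := sub_pos.2 (hF z hz)
    have hδle : ∀ y ∈ Icc T₁ T₂, δ ≤ y - g y := fun y hy => hminz hy
    -- some iterate drops below T₁
    have hN : ∃ N, x N ≤ T₁ := by
      by_contra hcon
      push_neg at hcon
      have hdec : ∀ n, x n ≤ T₂ - n * δ := by
        intro n
        induction n with
        | zero => simp [hx0]
        | succ n ih =>
          have hmem : x n ∈ Icc T₁ T₂ := ⟨(hcon n).le, by nlinarith [n.cast_nonneg (α := ℝ)]⟩
          have := hδle (x n) hmem
          have hxx : x (n + 1) ≤ x n - δ := by rw [hxs n]; linarith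
          push_cast
          nlinarith
      obtain ⟨n, hn⟩ := exists_nat_gt ((T₂ - T₁) / δ)
      have : T₂ - T₁ < n * δ := by
        rw [div_lt_iff₀ hδpos] at hn; linarith
      have := hdec n
      have := hcon n
      linarith
    obtain ⟨N, hNle⟩ := hN
    -- each annulus is null
    have hSn : ∀ n, μ (Ioc (x (n + 1)) (x n) ∩ Ioc T₁ T₂) = 0 := by
      intro n
      induction n with
      | zero =>
        have h0 := cancel (Ioc (h₂ T₂) (h₁ T₂)) measurableSet_Ioc
        rw [pre₁Ioc, pre₂Ioc, he₂'] at h0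
        have hx1 : e₁ (h₂ T₂) = x 1 := by rw [hxs 0, hx0]
        have hempty : Ioc T₂ (e₂ (h₁ T₂)) ∩ Ioc T₁ T₂ = ∅ := by
          rw [Set.eq_empty_iff_forall_notMem]
          rintro y ⟨hy1, hy2⟩
          exact absurd hy2.2 (not_le.2 hy1.1)
        rw [hempty, measure_empty, he₁' T₂] at h0
        rw [hx0, ← hx1]
        exact h0.symm
      | succ n ih =>
        have h0 := cancel (Ioc (h₁ (x (n + 2))) (h₁ (x (n + 1)))) measurableSet_Ioc
        rw [pre₁Ioc, pre₂Ioc, he₁', he₁'] at h0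
        have hkey : ∀ k, e₂ (h₁ (x (k + 1))) = x k := by
          intro k
          rw [hxs k, hgdef]
          simp only []
          rw [he₁, he₂']
        rw [hkey (n + 1), hkey n] at h0
        rw [ih] at h0
        exact h0.symm
    -- covering
    have hcover : Ioc T₁ T₂ ⊆ ⋃ n, (Ioc (x (n + 1)) (x n) ∩ Ioc T₁ T₂) := by
      intro t ht
      have hex : ∃ n, x n < t := ⟨N, lt_of_le_of_lt hNle ht.1⟩
      have hfind := Nat.find_spec hex
      have hne0 : Nat.find hex ≠ 0 := by
        intro h0
        rw [h0, hx0] at hfind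
        exact absurd ht.2 (not_le.2 hfind)
      obtain ⟨m, hm⟩ := Nat.exists_eq_succ_of_ne_zero hne0
      have hmlt : ¬ x m < t := Nat.find_min hex (by omega)
      rw [hm] at hfind
      exact mem_iUnion.2 ⟨m, ⟨⟨hfind, not_lt.1 hmlt⟩, ht⟩⟩
    exact measure_mono_null hcover (measure_iUnion_null hSn)

  have hqT₁ : T₁ < q := by linarith
  -- one–branch measure monotonicity
  have key₁ : ∀ A : Set ℝ, MeasurableSet A → h₁ ⁻¹' A ⊆ Iic T₁ → μ (h₁ ⁻¹' A) ≤ μ A := by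
    intro A hA hsub
    have k := hinv₁.measure_preimage hA.nullMeasurableSet
    rw [coreMap_preimage] at k
    calc μ (h₁ ⁻¹' A) = μ (h₁ ⁻¹' A ∩ Iic T₁) := by rw [inter_eq_self_of_subset_left hsub]
    _ ≤ μ ((h₁ ⁻¹' A ∩ Iic T₁) ∪ (h₂ ⁻¹' A ∩ Ioi T₁)) := measure_mono subset_union_left
    _ = μ A := k
  have key₂ : ∀ A : Set ℝ, MeasurableSet A → h₂ ⁻¹' A ⊆ Ioi T₁ → μ (h₂ ⁻¹' A) ≤ μ A := by
    intro A hA hsub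
    have k := hinv₁.measure_preimage hA.nullMeasurableSet
    rw [coreMap_preimage] at k
    calc μ (h₂ ⁻¹' A) = μ (h₂ ⁻¹' A ∩ Ioi T₁) := by rw [inter_eq_self_of_subset_left hsub]
    _ ≤ μ ((h₁ ⁻¹' A ∩ Iic T₁) ∪ (h₂ ⁻¹' A ∩ Ioi T₁)) := measure_mono subset_union_right
    _ = μ A := k
  -- positivity on subintervals of (a,b)
  have hP0 : ∀ u v : ℝ, u < v → Ioo u v ⊆ Ioo a b → 0 < μ (Ioo u v) := by
    intro u v huv hsub
    by_contra hcon
    have h0 : μ (Ioo u v) = 0 := by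
      rcases (eq_or_lt_of_le (zero_le : (0:ENNReal) ≤ μ (Ioo u v))) with h | h
      · exact h.symm
      · exact absurd h hcon
    have hr : μ.restrict (Ioo a b) (Ioo u v) = 0 := by
      rw [Measure.restrict_apply measurableSet_Ioo, inter_eq_self_of_subset_left hsub]
      exact h0
    have hv := hvm hr
    rw [Measure.restrict_apply measurableSet_Ioo, inter_eq_self_of_subset_left hsub,
      Real.volume_Ioo] at hv
    rw [ENNReal.ofReal_eq_zero] at hv
    linarith
  have hlampos : (0:ℝ) < lam := by linarith
  -- escape to -∞ is impossible
  have escL : ∀ c d : ℝ, c < d → d < p → 0 < μ (Ioo c d) → False := by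
    intro c d hcd hdp hmpos
    have htail : Filter.Tendsto (fun j : ℕ => μ (Iic (p - (j:ℝ)))) Filter.atTop (nhds 0) := by
      have hanti : Antitone (fun j : ℕ => Iic (p - (j:ℝ))) := by
        intro i j hij
        apply Iic_subset_Iic.2
        have : (i:ℝ) ≤ j := Nat.cast_le.2 hij
        linarith
      have hint : (⋂ j : ℕ, Iic (p - (j:ℝ))) = ∅ := by
        rw [Set.eq_empty_iff_forall_notMem]
        intro y hy
        obtain ⟨j, hj⟩ := exists_nat_gt (p - y)
        have := mem_iInter.1 hy j
        rw [mem_Iic] at this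
        linarith
      have h := tendsto_measure_iInter_atTop (μ := μ)
        (fun j => (measurableSet_Iic).nullMeasurableSet) hanti ⟨0, measure_ne_top μ _⟩
      rw [hint] at h
      simpa [Function.comp_def] using h
    obtain ⟨j, hj⟩ : ∃ j : ℕ, μ (Iic (p - (j:ℝ))) < μ (Ioo c d) :=
      (htail.eventually_lt_const hmpos).exists
    have H : ∀ n : ℕ, ∃ c' d' : ℝ, c' < d' ∧ lam ^ n * (p - d) ≤ p - d' ∧
        μ (Ioo c d) ≤ μ (Ioo c' d') := by
      intro n
      induction n with
      | zero => exact ⟨c, d, hcd, by simp, le_rfl⟩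
      | succ n ih =>
        obtain ⟨c', d', hcd', hgrow, hmeas⟩ := ih
        have hpn : (0:ℝ) < lam ^ n := pow_pos hlampos n
        have hd'p : d' < p := by nlinarith
        have hpre : h₁ ⁻¹' (Ioo (h₁ c') (h₁ d')) = Ioo c' d' := by
          rw [pre₁Ioo, he₁', he₁']
        have hsub : h₁ ⁻¹' (Ioo (h₁ c') (h₁ d')) ⊆ Iic T₁ := by
          rw [hpre]; exact fun y hy => le_of_lt (lt_trans hy.2 (lt_trans hd'p hpT₁))
        have hle := key₁ _ measurableSet_Ioo hsub
        rw [hpre] at hle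
        refine ⟨h₁ c', h₁ d', h₁mono hcd', ?_, le_trans hmeas hle⟩
        have hexp := exp₁ d' p hd'p.le
        rw [hfp] at hexp
        calc lam ^ (n+1) * (p - d) = lam * (lam ^ n * (p - d)) := by ring
        _ ≤ lam * (p - d') := by nlinarith
        _ ≤ p - h₁ d' := by linarith
    obtain ⟨n, hn⟩ := pow_unbounded_of_one_lt ((j : ℝ) / (p - d)) hlam
    obtain ⟨c', d', hcd', hgrow, hmeas⟩ := H n
    have hpd : (0:ℝ) < p - d := by linarith
    have hjlt : (j:ℝ) < lam ^ n * (p - d) := by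
      rw [div_lt_iff₀ hpd] at hn; linarith
    have hsub2 : Ioo c' d' ⊆ Iic (p - (j:ℝ)) := by
      intro y hy
      rw [mem_Iic]
      have := hy.2
      linarith
    exact absurd hj (not_lt.2 (le_trans hmeas (measure_mono hsub2)))
  -- escape to +∞ is impossible
  have escR : ∀ c d : ℝ, c < d → q < c → 0 < μ (Ioo c d) → False := by
    intro c d hcd hqc hmpos
    have htail : Filter.Tendsto (fun j : ℕ => μ (Ici (q + (j:ℝ)))) Filter.atTop (nhds 0) := by
      have hanti : Antitone (fun j : ℕ => Ici (q + (j:ℝ))) := by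
        intro i j hij
        apply Ici_subset_Ici.2
        have : (i:ℝ) ≤ j := Nat.cast_le.2 hij
        linarith
      have hint : (⋂ j : ℕ, Ici (q + (j:ℝ))) = ∅ := by
        rw [Set.eq_empty_iff_forall_notMem]
        intro y hy
        obtain ⟨j, hj⟩ := exists_nat_gt (y - q)
        have := mem_iInter.1 hy j
        rw [mem_Ici] at this
        linarith
      have h := tendsto_measure_iInter_atTop (μ := μ)
        (fun j => (measurableSet_Ici).nullMeasurableSet) hanti ⟨0, measure_ne_top μ _⟩
      rw [hint] at h
      simpa [Function.comp_def] using h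
    obtain ⟨j, hj⟩ : ∃ j : ℕ, μ (Ici (q + (j:ℝ))) < μ (Ioo c d) :=
      (htail.eventually_lt_const hmpos).exists
    have H : ∀ n : ℕ, ∃ c' d' : ℝ, c' < d' ∧ lam ^ n * (c - q) ≤ c' - q ∧
        μ (Ioo c d) ≤ μ (Ioo c' d') := by
      intro n
      induction n with
      | zero => exact ⟨c, d, hcd, by simp, le_rfl⟩
      | succ n ih =>
        obtain ⟨c', d', hcd', hgrow, hmeas⟩ := ih
        have hpn : (0:ℝ) < lam ^ n := pow_pos hlampos n
        have hqc' : q < c' := by nlinarith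
        have hpre : h₂ ⁻¹' (Ioo (h₂ c') (h₂ d')) = Ioo c' d' := by
          rw [pre₂Ioo, he₂', he₂']
        have hsub : h₂ ⁻¹' (Ioo (h₂ c') (h₂ d')) ⊆ Ioi T₁ := by
          rw [hpre]; intro y hy; exact lt_trans (by linarith : T₁ < c') hy.1
        have hle := key₂ _ measurableSet_Ioo hsub
        rw [hpre] at hle
        refine ⟨h₂ c', h₂ d', h₂mono hcd', ?_, le_trans hmeas hle⟩
        have hexp := exp₂ q c' hqc'.le
        rw [hfq] at hexp
        calc lam ^ (n+1) * (c - q) = lam * (lam ^ n * (c - q)) := by ring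
        _ ≤ lam * (c' - q) := by nlinarith
        _ ≤ h₂ c' - q := by linarith
    obtain ⟨n, hn⟩ := pow_unbounded_of_one_lt ((j : ℝ) / (c - q)) hlam
    obtain ⟨c', d', hcd', hgrow, hmeas⟩ := H n
    have hcq : (0:ℝ) < c - q := by linarith
    have hjlt : (j:ℝ) < lam ^ n * (c - q) := by
      rw [div_lt_iff₀ hcq] at hn; linarith
    have hsub2 : Ioo c' d' ⊆ Ici (q + (j:ℝ)) := by
      intro y hy
      rw [mem_Ici]
      have := hy.1
      linarith
    exact absurd hj (not_lt.2 (le_trans hmeas (measure_mono hsub2)))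
  -- main expansion loop inside (p,q)
  have hmain : ∀ c₀ d₀ : ℝ, c₀ < d₀ → p ≤ c₀ → d₀ ≤ q →
      (∀ u v : ℝ, u < v → Ioo u v ⊆ Ioo c₀ d₀ → 0 < μ (Ioo u v)) → False := by
    intro c₀ d₀ hcd₀ hpc₀ hdq₀ hP
    have H : ∀ n : ℕ, ∃ c d : ℝ, c < d ∧ p ≤ c ∧ d ≤ q ∧
        (∀ u v : ℝ, u < v → Ioo u v ⊆ Ioo c d → 0 < μ (Ioo u v)) ∧
        lam ^ n * (d₀ - c₀) ≤ d - c := by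
      intro n
      induction n with
      | zero => exact ⟨c₀, d₀, hcd₀, hpc₀, hdq₀, hP, by simp⟩
      | succ n ih =>
        obtain ⟨c, d, hcd, hpc, hdq, hPn, hlen⟩ := ih
        by_cases hcase₁ : d ≤ T₁
        · refine ⟨h₁ c, h₁ d, h₁mono hcd, ?_, ?_, ?_, ?_⟩
          · rw [← hfp]; exact h₁mono.le_iff_le.2 hpc
          · have h1 : h₁ d ≤ h₁ T₁ := h₁mono.le_iff_le.2 hcase₁
            have h2 : h₁ T₁ < 1 := by rw [← ht₁]; exact h₁mono hT₁.2
            linarith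
          · intro u v huv hsub
            have hsubcd : Ioo (e₁ u) (e₁ v) ⊆ Ioo c d := by
              intro y hy
              have h1 : u < h₁ y := by
                have := h₁mono hy.1; rwa [he₁] at this
              have h2 : h₁ y < v := by
                have := h₁mono hy.2; rwa [he₁] at this
              obtain ⟨ha', hb'⟩ := hsub ⟨h1, h2⟩
              exact ⟨h₁mono.lt_iff_lt.1 ha', h₁mono.lt_iff_lt.1 hb'⟩
            have hpos := hPn (e₁ u) (e₁ v) (e₁mono huv) hsubcd
            have hsubI : h₁ ⁻¹' Ioo u v ⊆ Iic T₁ := by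
              rw [pre₁Ioo]
              intro y hy
              exact le_of_lt (lt_of_lt_of_le (hsubcd hy).2 hcase₁)
            have hle := key₁ _ measurableSet_Ioo hsubI
            rw [pre₁Ioo] at hle
            exact lt_of_lt_of_le hpos hle
          · have hexp := exp₁ c d hcd.le
            calc lam ^ (n+1) * (d₀ - c₀) = lam * (lam ^ n * (d₀ - c₀)) := by ring
            _ ≤ lam * (d - c) := by nlinarith
            _ ≤ h₁ d - h₁ c := hexp
        · by_cases hcase₂ : T₂ ≤ c
          · refine ⟨h₂ c, h₂ d, h₂mono hcd, ?_, ?_, ?_, ?_⟩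
            · have h1 : h₂ t₀ < h₂ T₂ := h₂mono (by linarith [hT₂.1])
              have h2 : h₂ T₂ ≤ h₂ c := h₂mono.le_iff_le.2 hcase₂
              rw [ht₀] at h1
              linarith
            · rw [← hfq]; exact h₂mono.le_iff_le.2 hdq
            · intro u v huv hsub
              have hsubcd : Ioo (e₂ u) (e₂ v) ⊆ Ioo c d := by
                intro y hy
                have h1 : u < h₂ y := by
                  have := h₂mono hy.1; rwa [he₂] at this
                have h2 : h₂ y < v := by
                  have := h₂mono hy.2; rwa [he₂] at this
                obtain ⟨ha', hb'⟩ := hsub ⟨h1, h2⟩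
                exact ⟨h₂mono.lt_iff_lt.1 ha', h₂mono.lt_iff_lt.1 hb'⟩
              have hpos := hPn (e₂ u) (e₂ v) (e₂mono huv) hsubcd
              have hsubI : h₂ ⁻¹' Ioo u v ⊆ Ioi T₁ := by
                rw [pre₂Ioo]
                intro y hy
                exact lt_of_lt_of_le hlt (le_trans hcase₂ (le_of_lt (hsubcd hy).1))
              have hle := key₂ _ measurableSet_Ioo hsubI
              rw [pre₂Ioo] at hle
              exact lt_of_lt_of_le hpos hle
            · have hexp := exp₂ c d hcd.le
              calc lam ^ (n+1) * (d₀ - c₀) = lam * (lam ^ n * (d₀ - c₀)) := by ring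
              _ ≤ lam * (d - c) := by nlinarith
              _ ≤ h₂ d - h₂ c := hexp
          · exfalso
            push_neg at hcase₁ hcase₂
            have hmax : max c T₁ < min d T₂ :=
              max_lt (lt_min hcd hcase₂) (lt_min hcase₁ hlt)
            have hpos := hPn (max c T₁) (min d T₂) hmax (by
              intro y hy
              exact ⟨lt_of_le_of_lt (le_max_left c T₁) hy.1,
                lt_of_lt_of_le hy.2 (min_le_left d T₂)⟩)
            have hzero : μ (Ioo (max c T₁) (min d T₂)) = 0 := by
              apply measure_mono_null ?_ hJ
              intro y hy
              exact ⟨lt_of_le_of_lt (le_max_right c T₁) hy.1,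
                le_of_lt (lt_of_lt_of_le hy.2 (min_le_right d T₂))⟩
            exact hpos.ne' hzero
    obtain ⟨n, hn⟩ := pow_unbounded_of_one_lt ((q - p) / (d₀ - c₀)) hlam
    obtain ⟨c, d, hcd, hpc, hdq, _, hlen⟩ := H n
    have h1 : (0:ℝ) < d₀ - c₀ := by linarith
    rw [div_lt_iff₀ h1] at hn
    have : d - c ≤ q - p := by linarith
    nlinarith
  -- final case split on the position of (a,b)
  by_cases hmeet : (Ioo a b ∩ Ioo p q).Nonempty
  · obtain ⟨z, hz1, hz2⟩ := hmeet
    have hc₀z : max a p < z := max_lt hz1.1 hz2.1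
    have hzd₀ : z < min b q := lt_min hz1.2 hz2.2
    apply hmain (max a p) (min b q) (lt_trans hc₀z hzd₀) (le_max_right a p) (min_le_right b q)
    intro u v huv hsub
    apply hP0 u v huv
    intro y hy
    obtain ⟨hy1, hy2⟩ := hsub hy
    exact ⟨lt_of_le_of_lt (le_max_left a p) hy1, lt_of_lt_of_le hy2 (min_le_left b q)⟩
  · have hempty : Ioo a b ∩ Ioo p q = ∅ := not_nonempty_iff_eq_empty.1 hmeet
    have hcase : b ≤ p ∨ q ≤ a := by
      by_contra hcon
      push_neg at hcon
      obtain ⟨hpb, haq⟩ := hcon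
      have hpq : p < q := by linarith
      have h1 : max a p < min b q := max_lt (lt_min hab haq) (lt_min hpb hpq)
      set w := (max a p + min b q) / 2 with hw
      have hw1 : max a p < w := by rw [hw]; linarith
      have hw2 : w < min b q := by rw [hw]; linarith
      have hmem : w ∈ Ioo a b ∩ Ioo p q :=
        ⟨⟨lt_of_le_of_lt (le_max_left a p) hw1, lt_of_lt_of_le hw2 (min_le_left b q)⟩,
          ⟨lt_of_le_of_lt (le_max_right a p) hw1, lt_of_lt_of_le hw2 (min_le_right b q)⟩⟩
      rw [hempty] at hmem
      exact hmem
    rcases hcase with hbp | hqa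
    · have h2 : a < (a + b) / 2 := by linarith
      have h3 : (a + b) / 2 < p := by linarith
      exact escL a ((a + b) / 2) h2 h3
        (hP0 a _ h2 (fun y hy => ⟨hy.1, by linarith [hy.2]⟩))
    · have h2 : (a + b) / 2 < b := by linarith
      have h3 : q < (a + b) / 2 := by linarith
      exact escR ((a + b) / 2) b h2 h3
        (hP0 _ b h2 (fun y hy => ⟨by linarith [hy.1], hy.2⟩))

/-- **Proposition 5.18, item (2).** Under the superposition hypothesis for the expanding
maps `h₁, h₂`: for `T₁, T₂ ∈ (t₀, t₁)` with `T₁ ≠ T₂`, any measures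
`μ₁ ∈ M_eqLeb(φ_{T₁})` and `μ₂ ∈ M_eqLeb(φ_{T₂})` are different. -/
theorem MeqLeb_pairwise_distinct
    (lam : ℝ) (hlam : 1 < lam)
    (h₁ h₂ : ℝ → ℝ)
    (h₁C : ContDiff ℝ 2 h₁) (h₂C : ContDiff ℝ 2 h₂)
    (h₁mono : StrictMono h₁) (h₂mono : StrictMono h₂)
    (h₁bij : Function.Bijective h₁) (h₂bij : Function.Bijective h₂)
    (h₁deriv : ∀ t, lam ≤ deriv h₁ t) (h₂deriv : ∀ t, lam ≤ deriv h₂ t)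
    (p q : ℝ) (hp : p < 0) (hq : 1 < q)
    (hfp : h₁ p = p) (hfq : h₂ q = q)
    (hsup : ∀ t ∈ Set.Icc (0 : ℝ) 1, h₁ t ∈ Set.Ioo (0 : ℝ) 1 ∨ h₂ t ∈ Set.Ioo (0 : ℝ) 1)
    (t₀ t₁ : ℝ) (ht₀ : h₂ t₀ = 0) (ht₁ : h₁ t₁ = 1)
    (T₁ T₂ : ℝ) (hT₁ : T₁ ∈ Set.Ioo t₀ t₁) (hT₂ : T₂ ∈ Set.Ioo t₀ t₁) (hne : T₁ ≠ T₂)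
    (μ₁ μ₂ : Measure ℝ)
    (hμ₁ : μ₁ ∈ MeqLeb (coreMap h₁ h₂ T₁)) (hμ₂ : μ₂ ∈ MeqLeb (coreMap h₁ h₂ T₂)) :
    μ₁ ≠ μ₂ := by
  intro heq
  obtain ⟨hprob₁, herg₁, a, b, hab, _, hvm⟩ := hμ₁
  obtain ⟨hprob₂, herg₂, a', b', hab', _, hvm'⟩ := hμ₂
  rw [← heq] at herg₂
  rcases lt_or_gt_of_ne hne with h | h
  · exact key_contra lam hlam h₁ h₂ h₁C h₂C h₁mono h₂mono h₁bij h₂bij h₁deriv h₂deriv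
      p q hp hq hfp hfq t₀ t₁ ht₀ ht₁ T₁ T₂ hT₁ hT₂ h μ₁ hprob₁
      herg₁.toMeasurePreserving herg₂.toMeasurePreserving a b hab hvm
  · exact key_contra lam hlam h₁ h₂ h₁C h₂C h₁mono h₂mono h₁bij h₂bij h₁deriv h₂deriv
      p q hp hq hfp hfq t₀ t₁ ht₀ ht₁ T₂ T₁ hT₂ hT₁ h μ₁ hprob₁
      herg₂.toMeasurePreserving herg₁.toMeasurePreserving a b hab hvm
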